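/- Let Λ be a lattice of full rank in ℝ^n, let B > 0, and let H be a k-dimensional affine subspace of ℝ^n with 1 ≤ k < n. Then |Λ ∩ H ∩ [0,B)^n| ≤ n^{k/2} (B + 2ν(Λ))^k (2ν(Λ))^{n−k} / det Λ. -/

import Mathlib

/-- The covering radius of a lattice: the supremum over `x` of the distance from `x`
to the nearest lattice point. -/
noncomputable def covRad {n : ℕ} (Λ : Submodule ℤ (EuclideanSpace ℝ (Fin n))) : ℝ :=
  ⨆ x : EuclideanSpace ℝ (Fin n), Metric.infDist x (Λ : Set (EuclideanSpace ℝ (Fin n)))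

/-- The half-open cube `[0, B)^n`. -/
def cube (n : ℕ) (B : ℝ) : Set (EuclideanSpace ℝ (Fin n)) :=
  {x | ∀ i, 0 ≤ x i ∧ x i < B}

open MeasureTheory Metric Set Module Pointwise RealInnerProductSpace

section Aux

variable {n : ℕ} (Λ : Submodule ℤ (EuclideanSpace ℝ (Fin n)))
  [DiscreteTopology Λ] [IsZLattice ℝ Λ]

lemma covRad_bddAbove :
    BddAbove (Set.range fun x : EuclideanSpace ℝ (Fin n) =>
      Metric.infDist x (Λ : Set (EuclideanSpace ℝ (Fin n)))) := by
  classical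
  let b := Module.Free.chooseBasis ℤ Λ
  let b' := Basis.ofZLatticeBasis ℝ Λ b
  refine ⟨∑ i, ‖b' i‖, ?_⟩
  rintro _ ⟨x, rfl⟩
  have hmem : x - ZSpan.fract b' x ∈ Λ := by
    have h : x - ZSpan.fract b' x = (ZSpan.floor b' x : EuclideanSpace ℝ (Fin n)) := by
      rw [ZSpan.fract_apply]; abel
    have h2 := SetLike.coe_mem (ZSpan.floor b' x)
    rw [h]
    exact (b.ofZLatticeBasis_span ℝ).le h2
  calc Metric.infDist x (Λ : Set _) ≤ dist x (x - ZSpan.fract b' x) :=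
        Metric.infDist_le_dist_of_mem hmem
    _ = ‖ZSpan.fract b' x‖ := by rw [dist_eq_norm, sub_sub_cancel]
    _ ≤ ∑ i, ‖b' i‖ := ZSpan.norm_fract_le b' x

lemma infDist_le_covRad (x : EuclideanSpace ℝ (Fin n)) :
    Metric.infDist x (Λ : Set (EuclideanSpace ℝ (Fin n))) ≤ covRad Λ :=
  le_ciSup (covRad_bddAbove Λ) x

lemma covRad_nonneg : 0 ≤ covRad Λ :=
  Metric.infDist_nonneg.trans (infDist_le_covRad Λ 0)

lemma lat_isClosed : IsClosed (Λ : Set (EuclideanSpace ℝ (Fin n))) := by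
  haveI : DiscreteTopology Λ.toAddSubgroup := ‹DiscreteTopology Λ›
  exact AddSubgroup.isClosed_of_discrete (H := Λ.toAddSubgroup)

/-- The open Voronoi cell of the lattice at the origin. -/
def vorD : Set (EuclideanSpace ℝ (Fin n)) :=
  {x | ∀ y ∈ (Λ : Set (EuclideanSpace ℝ (Fin n))), y ≠ 0 → dist x 0 < dist x y}

lemma vorD_measurable : MeasurableSet (vorD Λ) := by
  haveI : Countable (Λ : Set (EuclideanSpace ℝ (Fin n))) := (inferInstance : Countable Λ)
  have hc : (Λ : Set (EuclideanSpace ℝ (Fin n))).Countable := Set.to_countable _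
  have h : vorD Λ = ⋂ y ∈ (Λ : Set (EuclideanSpace ℝ (Fin n))), ⋂ (_ : y ≠ 0),
      {x : EuclideanSpace ℝ (Fin n) | dist x 0 < dist x y} := by
    ext x; simp [vorD]
  rw [h]
  refine MeasurableSet.biInter hc fun y _ => MeasurableSet.iInter fun _ => ?_
  exact (isOpen_lt (continuous_id.dist continuous_const)
    (continuous_id.dist continuous_const)).measurableSet

lemma vorD_subset : vorD Λ ⊆ Metric.closedBall 0 (covRad Λ) := by
  intro x hx
  obtain ⟨y₀, hy₀mem, hy₀⟩ := (lat_isClosed Λ).exists_infDist_eq_dist ⟨0, Λ.zero_mem⟩ x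
  rcases eq_or_ne y₀ 0 with h0 | h0
  · rw [mem_closedBall]
    calc dist x 0 = Metric.infDist x (Λ : Set _) := by rw [hy₀, h0]
      _ ≤ covRad Λ := infDist_le_covRad Λ x
  · exact absurd (hx y₀ hy₀mem h0) (not_lt.2 (hy₀ ▸ Metric.infDist_le_dist_of_mem Λ.zero_mem))

lemma vorD_disjoint : Pairwise (Function.onFun Disjoint fun g : Λ => (g : EuclideanSpace ℝ (Fin n)) +ᵥ vorD Λ) := by
  intro g g' hgg'
  rw [Function.onFun, Set.disjoint_left]
  rintro z ⟨v, hv, rfl⟩ ⟨v', hv', hz⟩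
  have hz' : (g' : EuclideanSpace ℝ (Fin n)) + v' = (g : EuclideanSpace ℝ (Fin n)) + v := hz
  have hv'eq : v' = (g : EuclideanSpace ℝ (Fin n)) + v - (g' : EuclideanSpace ℝ (Fin n)) := by
    rw [← hz']; abel
  have hveq : v - ((g' : EuclideanSpace ℝ (Fin n)) - (g : EuclideanSpace ℝ (Fin n))) = v' := by
    rw [hv'eq]; abel
  have hveq2 : v' - ((g : EuclideanSpace ℝ (Fin n)) - (g' : EuclideanSpace ℝ (Fin n))) = v := by
    rw [hv'eq]; abel
  have h1 : ‖v‖ < ‖v'‖ := by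
    have h := hv ((g' : EuclideanSpace ℝ (Fin n)) - g) (Λ.sub_mem g'.2 g.2)
      (sub_ne_zero.2 (by exact_mod_cast hgg'.symm))
    rwa [dist_eq_norm, dist_eq_norm, sub_zero, hveq] at h
  have h2 : ‖v'‖ < ‖v‖ := by
    have h := hv' ((g : EuclideanSpace ℝ (Fin n)) - g') (Λ.sub_mem g.2 g'.2)
      (sub_ne_zero.2 (by exact_mod_cast hgg'))
    rwa [dist_eq_norm, dist_eq_norm, sub_zero, hveq2] at h
  exact absurd h1 (not_lt.2 h2.le)

lemma vorD_isAddFundamentalDomain :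
    IsAddFundamentalDomain Λ (vorD Λ) (volume : Measure (EuclideanSpace ℝ (Fin n))) := by
  refine ⟨(vorD_measurable Λ).nullMeasurableSet, ?_,
    fun g g' hgg' => ((vorD_disjoint Λ) hgg').aedisjoint⟩
  set N : Set (EuclideanSpace ℝ (Fin n)) := ⋃ p : Λ × Λ, ⋃ (_ : p.1 ≠ p.2),
    (AffineSubspace.perpBisector (p.1 : EuclideanSpace ℝ (Fin n))
      (p.2 : EuclideanSpace ℝ (Fin n)) : Set (EuclideanSpace ℝ (Fin n))) with hN
  have hNnull : volume N = 0 := by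
    refine measure_iUnion_null fun p => measure_iUnion_null fun hp => ?_
    exact Measure.addHaar_affineSubspace _ _
      (fun h => hp (Subtype.coe_injective (AffineSubspace.perpBisector_eq_top.mp h)))
  have hae : ∀ᵐ x ∂(volume : Measure (EuclideanSpace ℝ (Fin n))), x ∉ N :=
    measure_eq_zero_iff_ae_notMem.mp hNnull
  filter_upwards [hae] with x hx
  simp only [hN, Set.mem_iUnion, not_exists] at hx
  obtain ⟨y₀, hy₀mem, hy₀⟩ := (lat_isClosed Λ).exists_infDist_eq_dist ⟨0, Λ.zero_mem⟩ x
  refine ⟨-⟨y₀, hy₀mem⟩, ?_⟩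
  show -y₀ + x ∈ vorD Λ
  intro y hy hy0
  have e1 : dist (-y₀ + x) 0 = dist x y₀ := by
    rw [dist_eq_norm, dist_eq_norm]; congr 1; abel
  have e2 : dist (-y₀ + x) y = dist x (y₀ + y) := by
    rw [dist_eq_norm, dist_eq_norm]; congr 1; abel
  rw [e1, e2]
  have hle : dist x y₀ ≤ dist x (y₀ + y) :=
    hy₀ ▸ Metric.infDist_le_dist_of_mem (Λ.add_mem hy₀mem hy)
  have hne : dist x y₀ ≠ dist x (y₀ + y) := by
    have hpp : (⟨y₀, hy₀mem⟩ : Λ) ≠ ⟨y₀ + y, Λ.add_mem hy₀mem hy⟩ := by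
      intro h
      exact hy0 (by simpa using (left_eq_add.mp (congrArg Subtype.val h)))
    have := hx (⟨y₀, hy₀mem⟩, ⟨y₀ + y, Λ.add_mem hy₀mem hy⟩) hpp
    exact fun h => this (AffineSubspace.mem_perpBisector_iff_dist_eq.mpr h)
  exact lt_of_le_of_ne hle hne

lemma covolume_eq_vorD : ZLattice.covolume Λ = (volume (vorD Λ)).toReal :=
  ZLattice.covolume_eq_measure_fundamentalDomain Λ volume (vorD_isAddFundamentalDomain Λ)

end Aux

lemma cube_norm_sub_le {n : ℕ} {B : ℝ} (hB : 0 ≤ B) {x x' : EuclideanSpace ℝ (Fin n)}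
    (hx : x ∈ cube n B) (hx' : x' ∈ cube n B) : ‖x - x'‖ ≤ Real.sqrt n * B := by
  rw [EuclideanSpace.norm_eq]
  have hsum : ∑ i, ‖(x - x') i‖ ^ 2 ≤ (n : ℝ) * B ^ 2 := by
    have hle : ∀ i ∈ Finset.univ, ‖(x - x') i‖ ^ 2 ≤ B ^ 2 := by
      intro i _
      have h1 := hx i
      have h2 := hx' i
      have habs : ‖(x - x') i‖ ≤ B := by
        have h : (x - x') i = x i - x' i := rfl
        rw [h, Real.norm_eq_abs, abs_sub_le_iff]
        constructor <;> linarith [h1.1, h1.2, h2.1, h2.2]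
      exact pow_le_pow_left₀ (norm_nonneg _) habs 2
    calc ∑ i, ‖(x - x') i‖ ^ 2 ≤ ∑ _i : Fin n, B ^ 2 := Finset.sum_le_sum hle
      _ = (n : ℝ) * B ^ 2 := by
        rw [Finset.sum_const, Finset.card_univ, Fintype.card_fin, nsmul_eq_mul]
  calc Real.sqrt (∑ i, ‖(x - x') i‖ ^ 2) ≤ Real.sqrt ((n : ℝ) * B ^ 2) :=
        Real.sqrt_le_sqrt hsum
    _ = Real.sqrt n * B := by
        rw [Real.sqrt_mul (Nat.cast_nonneg n), Real.sqrt_sq hB]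

lemma card_filter_fin_lt {n k : ℕ} (hkn : k ≤ n) :
    (Finset.univ.filter fun i : Fin n => (i : ℕ) < k).card = k := by
  have h : (Finset.univ.filter fun i : Fin n => (i : ℕ) < k) =
      Finset.map (Fin.castLEEmb hkn) Finset.univ := by
    ext i
    simp only [Finset.mem_filter, Finset.mem_univ, true_and, Finset.mem_map]
    constructor
    · intro h; exact ⟨⟨(i : ℕ), h⟩, rfl⟩
    · rintro ⟨j, rfl⟩; exact j.2
  rw [h, Finset.card_map, Finset.card_univ, Fintype.card_fin]

theorem lattice_points_in_hyperplane_bound (n k : ℕ)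
    (Λ : Submodule ℤ (EuclideanSpace ℝ (Fin n)))
    [DiscreteTopology Λ] [IsZLattice ℝ Λ] (B : ℝ) (hB : B > 0)
    (H : AffineSubspace ℝ (EuclideanSpace ℝ (Fin n)))
    (hH : Module.finrank ℝ H.direction = k) (hk1 : 1 ≤ k) (hkn : k < n) :
    (((Λ : Set (EuclideanSpace ℝ (Fin n))) ∩ (H : Set (EuclideanSpace ℝ (Fin n))) ∩
        cube n B).ncard : ℝ) ≤
      (n : ℝ) ^ ((k : ℝ) / 2) * (B + 2 * covRad Λ) ^ k * (2 * covRad Λ) ^ (n - k) /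
        ZLattice.covolume Λ := by
  classical
  set ν := covRad Λ with hνdef
  have hν0 : 0 ≤ ν := covRad_nonneg Λ
  have hcovol : 0 < ZLattice.covolume Λ := ZLattice.covolume_pos Λ volume
  set S : Set (EuclideanSpace ℝ (Fin n)) :=
    (Λ : Set (EuclideanSpace ℝ (Fin n))) ∩ (H : Set (EuclideanSpace ℝ (Fin n))) ∩ cube n B
    with hSdef
  have hRHS0 : 0 ≤ (n : ℝ) ^ ((k : ℝ) / 2) * (B + 2 * ν) ^ k * (2 * ν) ^ (n - k) /
      ZLattice.covolume Λ := by
    apply div_nonneg _ hcovol.le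
    have h1 : (0:ℝ) ≤ (n : ℝ) ^ ((k : ℝ) / 2) := Real.rpow_nonneg (Nat.cast_nonneg n) _
    exact mul_nonneg (mul_nonneg h1 (pow_nonneg (by linarith) k)) (pow_nonneg (by linarith) _)
  by_cases hfin : S.Finite
  swap
  · rw [Set.Infinite.ncard hfin]; exact_mod_cast hRHS0
  rcases S.eq_empty_or_nonempty with hSe | ⟨p₀, hp₀⟩
  · rw [hSe]; simpa using hRHS0
  obtain ⟨⟨hp₀Λ, hp₀H⟩, hp₀c⟩ := hp₀
  -- an orthonormal basis adapted to the direction of H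
  set D := H.direction with hDdef
  let w : OrthonormalBasis (Fin k) ℝ D :=
    (stdOrthonormalBasis ℝ D).reindex (finCongr hH)
  let v : Fin n → EuclideanSpace ℝ (Fin n) :=
    fun i => if h : (i : ℕ) < k then ((w ⟨(i : ℕ), h⟩ : D) : EuclideanSpace ℝ (Fin n)) else 0
  have hvo : Orthonormal ℝ (({i : Fin n | (i : ℕ) < k} : Set (Fin n)).restrict v) := by
    have he : ({i : Fin n | (i : ℕ) < k} : Set (Fin n)).restrict v =
        (D.subtypeₗᵢ ∘ (w ∘ fun i : {i : Fin n // (i : ℕ) < k} => (⟨(i.1 : ℕ), i.2⟩ : Fin k))) := by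
      funext i
      have h2 : ((i : Fin n) : ℕ) < k := i.2
      simp only [Set.restrict_apply, Function.comp_apply, v, dif_pos h2]
      show (if h : ((i : Fin n) : ℕ) < k then ((w ⟨((i : Fin n) : ℕ), h⟩ : D) : EuclideanSpace ℝ (Fin n)) else 0) = _
      rw [dif_pos h2]; rfl
    rw [he]
    refine Orthonormal.comp_linearIsometry ?_ _
    refine w.orthonormal.comp _ ?_
    intro a b hab
    have hval := congrArg (fun t : Fin k => (t : ℕ)) hab
    simp only at hval
    exact Subtype.ext (Fin.ext hval)
  obtain ⟨bE, hbE⟩ := hvo.exists_orthonormalBasis_extension_of_card_eq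
    (by simp) 
  have hbEk : ∀ (i : Fin n) (h : (i : ℕ) < k),
      bE i = ((w ⟨(i : ℕ), h⟩ : D) : EuclideanSpace ℝ (Fin n)) := by
    intro i h
    rw [hbE i h]
    simp only [v, dif_pos h]
  have horth : ∀ (i : Fin n), ¬ (i : ℕ) < k → ∀ z ∈ D, (inner ℝ (bE i) z : ℝ) = 0 := by
    intro i hi z hz
    have hzd : z = ∑ j : Fin k, w.repr ⟨z, hz⟩ j • ((w j : D) : EuclideanSpace ℝ (Fin n)) := by
      have hs := congrArg (D.subtype) (w.sum_repr ⟨z, hz⟩)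
      simp only [map_sum, _root_.map_smul, Submodule.coe_subtype] at hs
      exact hs.symm
    rw [hzd, inner_sum]
    refine Finset.sum_eq_zero fun j _ => ?_
    rw [real_inner_smul_right]
    have hjlt : ((⟨(j : ℕ), lt_trans j.2 hkn⟩ : Fin n) : ℕ) < k := j.2
    have hwj : ((w j : D) : EuclideanSpace ℝ (Fin n)) = bE ⟨(j : ℕ), lt_trans j.2 hkn⟩ :=
      (hbEk ⟨(j : ℕ), lt_trans j.2 hkn⟩ hjlt).symm
    rw [hwj, bE.orthonormal.2 (fun hij => hi (by rw [hij]; exact hjlt)), mul_zero]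
  -- the finite set of lattice points
  set S' : Finset (EuclideanSpace ℝ (Fin n)) := hfin.toFinset with hS'def
  have hp₀S' : p₀ ∈ S' := hfin.mem_toFinset.mpr ⟨⟨hp₀Λ, hp₀H⟩, hp₀c⟩
  have hne : S'.Nonempty := ⟨p₀, hp₀S'⟩
  set m : Fin n → ℝ := fun i => S'.inf' hne (fun x => ⟪bE i, x - p₀⟫) with hmdef
  set a : Fin n → ℝ := fun i => if (i : ℕ) < k then m i - ν else -ν with hadef
  set d : Fin n → ℝ := fun i => if (i : ℕ) < k then m i + Real.sqrt n * B + ν else ν with hddef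
  set T : Set (EuclideanSpace ℝ (Fin n)) :=
    p₀ +ᵥ (⇑bE.repr ⁻¹' (WithLp.ofLp ⁻¹' (Set.univ.pi fun i => Set.Icc (a i) (d i)) : Set (EuclideanSpace ℝ (Fin n)))) with hTdef
  have hsub : ∀ x ∈ S, (x +ᵥ vorD Λ) ⊆ T := by
    rintro x hx z ⟨u, hu, rfl⟩
    obtain ⟨⟨hxΛ, hxH⟩, hxc⟩ := hx
    have hxS' : x ∈ S' := hfin.mem_toFinset.mpr ⟨⟨hxΛ, hxH⟩, hxc⟩
    have hu' : ‖u‖ ≤ ν := by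
      have h := vorD_subset Λ hu
      simpa [Metric.mem_closedBall, dist_eq_norm] using h
    refine Set.mem_vadd_set.mpr ⟨x + u - p₀, ?_, by simp only [vadd_eq_add]; abel⟩
    simp only [Set.mem_preimage, Set.mem_univ_pi]
    intro i
    have hrepr : bE.repr (x + u - p₀) i =
        (inner ℝ (bE i) (x - p₀) : ℝ) + (inner ℝ (bE i) u : ℝ) := by
      rw [bE.repr_apply_apply, show x + u - p₀ = (x - p₀) + u by abel, inner_add_right]
    rw [hrepr, Set.mem_Icc]
    have hiu : |(inner ℝ (bE i) u : ℝ)| ≤ ν := by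
      calc |(inner ℝ (bE i) u : ℝ)| ≤ ‖bE i‖ * ‖u‖ := abs_real_inner_le_norm _ _
        _ = ‖u‖ := by rw [bE.orthonormal.1 i, one_mul]
        _ ≤ ν := hu'
    have hiu' := abs_le.mp hiu
    by_cases h : (i : ℕ) < k
    · have hlow : m i ≤ (inner ℝ (bE i) (x - p₀) : ℝ) :=
        Finset.inf'_le (fun y => (inner ℝ (bE i) (y - p₀) : ℝ)) hxS'
      have hup : (inner ℝ (bE i) (x - p₀) : ℝ) ≤ m i + Real.sqrt n * B := by
        obtain ⟨x', hx'S, hx'eq⟩ := S'.exists_mem_eq_inf' hne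
          (fun y => (inner ℝ (bE i) (y - p₀) : ℝ))
        have hx'c : x' ∈ cube n B := (hfin.mem_toFinset.mp hx'S).2
        have hdiff : (inner ℝ (bE i) (x - p₀) : ℝ) - (inner ℝ (bE i) (x' - p₀) : ℝ)
            = (inner ℝ (bE i) (x - x') : ℝ) := by
          rw [← inner_sub_right]
          congr 1
          abel
        have hbnd : (inner ℝ (bE i) (x - x') : ℝ) ≤ Real.sqrt n * B := by
          calc (inner ℝ (bE i) (x - x') : ℝ) ≤ |(inner ℝ (bE i) (x - x') : ℝ)| := le_abs_self _
            _ ≤ ‖bE i‖ * ‖x - x'‖ := abs_real_inner_le_norm _ _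
            _ = ‖x - x'‖ := by rw [bE.orthonormal.1 i, one_mul]
            _ ≤ Real.sqrt n * B := cube_norm_sub_le hB.le hxc hx'c
        have hm : m i = (inner ℝ (bE i) (x' - p₀) : ℝ) := hx'eq
        linarith
      simp only [hadef, hddef, if_pos h]
      constructor
      · linarith
      · linarith
    · have hzero : (inner ℝ (bE i) (x - p₀) : ℝ) = 0 := by
        refine horth i h (x - p₀) ?_
        have hd := AffineSubspace.vsub_mem_direction hxH hp₀H
        simpa [vsub_eq_sub] using hd
      simp only [hadef, hddef, if_neg h]
      rw [hzero, zero_add]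
      exact ⟨hiu'.1, hiu'.2⟩
  have hT : volume T = ENNReal.ofReal (Real.sqrt n * B + 2 * ν) ^ k *
      ENNReal.ofReal (2 * ν) ^ (n - k) := by
    have hP' : MeasurableSet (Set.univ.pi fun i => Set.Icc (a i) (d i) : Set (Fin n → ℝ)) :=
      MeasurableSet.univ_pi fun i => measurableSet_Icc
    have hPP : (⇑((MeasurableEquiv.toLp 2 (Fin n → ℝ)).symm) ⁻¹'
        (Set.univ.pi fun i => Set.Icc (a i) (d i) : Set (Fin n → ℝ)))
        = (WithLp.ofLp ⁻¹' (Set.univ.pi fun i => Set.Icc (a i) (d i)) : Set (EuclideanSpace ℝ (Fin n))) := rfl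
    have hP : MeasurableSet
        (WithLp.ofLp ⁻¹' (Set.univ.pi fun i => Set.Icc (a i) (d i)) : Set (EuclideanSpace ℝ (Fin n))) := by
      rw [← hPP]
      exact ((MeasurableEquiv.toLp 2 (Fin n → ℝ)).symm).measurable hP'
    rw [hTdef, measure_vadd,
      (bE.measurePreserving_repr).measure_preimage hP.nullMeasurableSet, ← hPP,
      (EuclideanSpace.volume_preserving_symm_measurableEquiv_toLp (Fin n)).measure_preimage
        hP'.nullMeasurableSet, volume_pi_pi]
    have hda : ∀ i : Fin n, volume (Set.Icc (a i) (d i)) =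
        if (i : ℕ) < k then ENNReal.ofReal (Real.sqrt n * B + 2 * ν)
        else ENNReal.ofReal (2 * ν) := by
      intro i
      rw [Real.volume_Icc]
      by_cases h : (i : ℕ) < k
      · rw [if_pos h]
        congr 1
        simp only [hadef, hddef, if_pos h]
        ring
      · rw [if_neg h]
        congr 1
        simp only [hadef, hddef, if_neg h]
        ring
    rw [Finset.prod_congr rfl (fun i _ => hda i), Finset.prod_ite, Finset.prod_const,
      Finset.prod_const, card_filter_fin_lt hkn.le]
    have hcardnot : (Finset.univ.filter fun i : Fin n => ¬ (i : ℕ) < k).card = n - k := by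
      have hh := Finset.card_filter_add_card_filter_not
        (s := (Finset.univ : Finset (Fin n))) (p := fun i : Fin n => (i : ℕ) < k)
      rw [card_filter_fin_lt hkn.le, Finset.card_univ, Fintype.card_fin] at hh
      omega
    rw [hcardnot]
  have hcount : (S'.card : ENNReal) * volume (vorD Λ) ≤ volume T := by
    have hdisj2 : (↑S' : Set (EuclideanSpace ℝ (Fin n))).PairwiseDisjoint
        (fun x => x +ᵥ vorD Λ) := by
      intro x hx y hy hxy
      have hxΛ : x ∈ Λ := (hfin.mem_toFinset.mp (Finset.mem_coe.mp hx)).1.1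
      have hyΛ : y ∈ Λ := (hfin.mem_toFinset.mp (Finset.mem_coe.mp hy)).1.1
      exact vorD_disjoint Λ
        (show (⟨x, hxΛ⟩ : Λ) ≠ ⟨y, hyΛ⟩ from fun h => hxy (congrArg Subtype.val h))
    have hunion : volume (⋃ x ∈ S', x +ᵥ vorD Λ) = ∑ x ∈ S', volume (x +ᵥ vorD Λ) :=
      measure_biUnion_finset hdisj2 (fun x _ => (vorD_measurable Λ).const_vadd x)
    have hsum : ∑ x ∈ S', volume (x +ᵥ vorD Λ) = S'.card * volume (vorD Λ) := by
      simp only [measure_vadd]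
      rw [Finset.sum_const, nsmul_eq_mul]
    calc (S'.card : ENNReal) * volume (vorD Λ)
        = volume (⋃ x ∈ S', x +ᵥ vorD Λ) := by rw [hunion, hsum]
      _ ≤ volume T := measure_mono (Set.iUnion₂_subset fun x hx =>
          hsub x (hfin.mem_toFinset.mp hx))
  -- convert to reals
  have hkey : (S'.card : ℝ) * ZLattice.covolume Λ ≤
      (Real.sqrt n * B + 2 * ν) ^ k * (2 * ν) ^ (n - k) := by
    have hTne : volume T ≠ ⊤ := by
      rw [hT]
      exact ENNReal.mul_ne_top (ENNReal.pow_ne_top ENNReal.ofReal_ne_top)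
        (ENNReal.pow_ne_top ENNReal.ofReal_ne_top)
    have h := ENNReal.toReal_mono hTne hcount
    rw [hT, ENNReal.toReal_mul, ENNReal.toReal_natCast, ← covolume_eq_vorD Λ,
      ENNReal.toReal_mul, ENNReal.toReal_pow, ENNReal.toReal_pow,
      ENNReal.toReal_ofReal (by nlinarith [Real.sqrt_nonneg (n : ℝ)]),
      ENNReal.toReal_ofReal (by linarith)] at h
    exact h
  have hncard : (S.ncard : ℝ) = (S'.card : ℝ) := by
    rw [Set.ncard_eq_toFinset_card S hfin]
  rw [hncard, le_div_iff₀ hcovol]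
  refine hkey.trans ?_
  have hn1 : (1:ℝ) ≤ Real.sqrt n := by
    rw [show (1:ℝ) = Real.sqrt 1 by simp]
    exact Real.sqrt_le_sqrt (by exact_mod_cast Nat.one_le_of_lt hkn)
  have hstep : Real.sqrt n * B + 2 * ν ≤ Real.sqrt n * (B + 2 * ν) := by
    nlinarith
  have hpow : (Real.sqrt n * B + 2 * ν) ^ k ≤ (Real.sqrt n * (B + 2 * ν)) ^ k :=
    pow_le_pow_left₀ (by positivity) hstep k
  calc (Real.sqrt n * B + 2 * ν) ^ k * (2 * ν) ^ (n - k)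
      ≤ (Real.sqrt n * (B + 2 * ν)) ^ k * (2 * ν) ^ (n - k) := by
        exact mul_le_mul_of_nonneg_right hpow (pow_nonneg (by linarith) _)
    _ = (n : ℝ) ^ ((k : ℝ) / 2) * (B + 2 * ν) ^ k * (2 * ν) ^ (n - k) := by
        rw [mul_pow]
        congr 2
        rw [Real.sqrt_eq_rpow, ← Real.rpow_natCast ((n:ℝ) ^ ((1:ℝ)/2)) k,
          ← Real.rpow_mul (Nat.cast_nonneg n)]
        norm_num
        ring_nf
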